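/- arXiv:2308.13717 — 2 statements merged into one kernel-verified Lean document; each statement's English description precedes it below -/
import Mathlib

section
/- Let σ₁,…,σₙ > 0 be constants and define V(x,t) = Σᵢ xᵢ + Σ_{i≠j} e^{σᵢ²(t−T)/8} e^{σⱼ²(t−T)/8} xᵢ^{1/2} xⱼ^{1/2} on ℝ₊ⁿ × [0,T]. Then V satisfies the PDE ∂V/∂t + (1/2) Σᵢ σᵢ² xᵢ² ∂²V/∂xᵢ² = 0 on ℝ₊ⁿ × [0,T], with terminal value V(x,T) = (x₁^{1/2} + ⋯ + xₙ^{1/2})². -/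
lemma aux_second_deriv (B C x0 : ℝ) (hx0 : 0 < x0) :
    iteratedDeriv 2 (fun y : ℝ => B * y ^ ((1:ℝ)/2) + (y + C)) x0
      = B * (-(1/4)) * x0 ^ (-(3/2) : ℝ) := by
  rw [iteratedDeriv_succ, iteratedDeriv_succ, iteratedDeriv_zero]
  have h1 : deriv (fun y : ℝ => B * y ^ ((1:ℝ)/2) + (y + C))
      =ᶠ[nhds x0] fun y : ℝ => B * ((1/2) * y ^ ((1:ℝ)/2 - 1)) + 1 := by
    filter_upwards [Ioi_mem_nhds hx0] with y hy
    have hd : HasDerivAt (fun y : ℝ => B * y ^ ((1:ℝ)/2) + (y + C))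
        (B * ((1/2) * y ^ ((1:ℝ)/2 - 1)) + 1) y :=
      ((Real.hasDerivAt_rpow_const (p := (1:ℝ)/2)
        (Or.inl (ne_of_gt (Set.mem_Ioi.mp hy)))).const_mul B).add
        ((hasDerivAt_id y).add_const C)
    exact hd.deriv
  rw [h1.deriv_eq]
  have hd2 : HasDerivAt (fun y : ℝ => B * ((1/2) * y ^ ((1:ℝ)/2 - 1)) + 1)
      (B * (-(1/4)) * x0 ^ (-(3/2) : ℝ)) x0 := by
    have h := (((Real.hasDerivAt_rpow_const (p := (1:ℝ)/2 - 1)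
      (Or.inl (ne_of_gt hx0))).const_mul (1/2 : ℝ)).const_mul B).add_const 1
    refine h.congr_deriv ?_
    norm_num
    ring
  rw [hd2.deriv]

lemma aux_time_deriv (n : ℕ) (T t A : ℝ) (σ : Fin n → ℝ) (K : Fin n → Fin n → ℝ) :
    HasDerivAt (fun s => A + ∑ i, ∑ j ∈ Finset.univ.erase i,
        Real.exp (σ i ^ 2 * (s - T) / 8) * Real.exp (σ j ^ 2 * (s - T) / 8) * K i j)
      (∑ i, ∑ j ∈ Finset.univ.erase i, (σ i ^ 2 / 8 + σ j ^ 2 / 8) *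
        (Real.exp (σ i ^ 2 * (t - T) / 8) * Real.exp (σ j ^ 2 * (t - T) / 8) * K i j)) t := by
  apply HasDerivAt.const_add
  apply HasDerivAt.fun_sum
  intro i _
  apply HasDerivAt.fun_sum
  intro j _
  have he : ∀ c : ℝ, HasDerivAt (fun s => Real.exp (c * (s - T) / 8))
      (Real.exp (c * (t - T) / 8) * (c * 1 / 8)) t := fun c =>
    ((((hasDerivAt_id t).sub_const T).const_mul c).div_const 8).exp
  have h := ((he (σ i ^ 2)).mul (he (σ j ^ 2))).mul_const (K i j)
  refine h.congr_deriv ?_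
  ring

/-- The function `V(x,t) = ∑ᵢ xᵢ + ∑_{i≠j} e^{σᵢ²(t−T)/8} e^{σⱼ²(t−T)/8} xᵢ^{1/2} xⱼ^{1/2}`
satisfies `∂V/∂t + (1/2)∑ᵢ σᵢ² xᵢ² ∂²V/∂xᵢ² = 0` with terminal value
`V(x,T) = (∑ᵢ xᵢ^{1/2})²`. -/
theorem sqrt_claim_pde (n : ℕ) (T : ℝ) (hT : 0 < T) (σ : Fin n → ℝ)
    (hσ : ∀ i, 0 < σ i) (V : (Fin n → ℝ) → ℝ → ℝ)
    (hV : ∀ (x : Fin n → ℝ) (t : ℝ), V x t = (∑ i, x i) +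
      ∑ i, ∑ j ∈ Finset.univ.erase i,
        Real.exp (σ i ^ 2 * (t - T) / 8) * Real.exp (σ j ^ 2 * (t - T) / 8) *
          (x i ^ ((1:ℝ)/2) * x j ^ ((1:ℝ)/2))) :
    ∀ x : Fin n → ℝ, (∀ i, 0 < x i) → ∀ t ∈ Set.Icc (0:ℝ) T,
      (deriv (fun s => V x s) t
        + (1/2) * ∑ i, σ i ^ 2 * x i ^ 2 *
            iteratedDeriv 2 (fun y => V (Function.update x i y) t) (x i) = 0) ∧
      V x T = (∑ i, x i ^ ((1:ℝ)/2)) ^ 2 := by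
  intro x hx t ht
  constructor
  · -- the PDE
    -- time derivative
    have hdt : deriv (fun s => V x s) t
        = ∑ i, ∑ j ∈ Finset.univ.erase i, (σ i ^ 2 / 8 + σ j ^ 2 / 8) *
          (Real.exp (σ i ^ 2 * (t - T) / 8) * Real.exp (σ j ^ 2 * (t - T) / 8) *
            (x i ^ ((1:ℝ)/2) * x j ^ ((1:ℝ)/2))) := by
      have hfun : (fun s => V x s) = fun s => (∑ i, x i) +
          ∑ i, ∑ j ∈ Finset.univ.erase i,
            Real.exp (σ i ^ 2 * (s - T) / 8) * Real.exp (σ j ^ 2 * (s - T) / 8) *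
              (x i ^ ((1:ℝ)/2) * x j ^ ((1:ℝ)/2)) := funext (hV x)
      rw [hfun]
      exact (aux_time_deriv n T t _ σ
        (fun i j => x i ^ ((1:ℝ)/2) * x j ^ ((1:ℝ)/2))).deriv
    -- space second derivatives
    have hfi : ∀ i : Fin n, (fun y => V (Function.update x i y) t)
        = fun y : ℝ => (2 * ∑ j ∈ Finset.univ.erase i,
            Real.exp (σ i ^ 2 * (t - T) / 8) * Real.exp (σ j ^ 2 * (t - T) / 8) *
              x j ^ ((1:ℝ)/2)) * y ^ ((1:ℝ)/2)
          + (y + ((∑ k ∈ Finset.univ.erase i, x k)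
            + ∑ k ∈ Finset.univ.erase i, ∑ l ∈ (Finset.univ.erase k).erase i,
              Real.exp (σ k ^ 2 * (t - T) / 8) * Real.exp (σ l ^ 2 * (t - T) / 8) *
                (x k ^ ((1:ℝ)/2) * x l ^ ((1:ℝ)/2)))) := by
      intro i
      funext y
      rw [hV]
      have hs1 : ∑ k, Function.update x i y k = y + ∑ k ∈ Finset.univ.erase i, x k := by
        rw [← Finset.add_sum_erase _ _ (Finset.mem_univ i), Function.update_self]
        congr 1
        exact Finset.sum_congr rfl fun k hk =>
          Function.update_of_ne (Finset.ne_of_mem_erase hk) _ _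
      have hs2 : ∑ k, ∑ l ∈ Finset.univ.erase k,
            Real.exp (σ k ^ 2 * (t - T) / 8) * Real.exp (σ l ^ 2 * (t - T) / 8) *
              (Function.update x i y k ^ ((1:ℝ)/2) * Function.update x i y l ^ ((1:ℝ)/2))
          = (∑ l ∈ Finset.univ.erase i,
              Real.exp (σ i ^ 2 * (t - T) / 8) * Real.exp (σ l ^ 2 * (t - T) / 8) *
                x l ^ ((1:ℝ)/2)) * y ^ ((1:ℝ)/2)
            + ((∑ k ∈ Finset.univ.erase i,
              Real.exp (σ k ^ 2 * (t - T) / 8) * Real.exp (σ i ^ 2 * (t - T) / 8) *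
                x k ^ ((1:ℝ)/2)) * y ^ ((1:ℝ)/2)
            + ∑ k ∈ Finset.univ.erase i, ∑ l ∈ (Finset.univ.erase k).erase i,
              Real.exp (σ k ^ 2 * (t - T) / 8) * Real.exp (σ l ^ 2 * (t - T) / 8) *
                (x k ^ ((1:ℝ)/2) * x l ^ ((1:ℝ)/2))) := by
        rw [← Finset.add_sum_erase _ _ (Finset.mem_univ i)]
        congr 1
        · rw [Finset.sum_mul]
          refine Finset.sum_congr rfl fun l hl => ?_
          rw [Function.update_self, Function.update_of_ne (Finset.ne_of_mem_erase hl)]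
          ring
        · rw [Finset.sum_mul, ← Finset.sum_add_distrib]
          refine Finset.sum_congr rfl fun k hk => ?_
          have hik : i ∈ Finset.univ.erase k :=
            Finset.mem_erase.mpr ⟨(Finset.ne_of_mem_erase hk).symm, Finset.mem_univ i⟩
          rw [← Finset.add_sum_erase _ _ hik]
          congr 1
          · rw [Function.update_self, Function.update_of_ne (Finset.ne_of_mem_erase hk)]
            ring
          · refine Finset.sum_congr rfl fun l hl => ?_
            rw [Function.update_of_ne (Finset.ne_of_mem_erase hk),
              Function.update_of_ne (Finset.ne_of_mem_erase hl)]
      rw [hs1, hs2]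
      have hcomm : (∑ k ∈ Finset.univ.erase i,
            Real.exp (σ k ^ 2 * (t - T) / 8) * Real.exp (σ i ^ 2 * (t - T) / 8) *
              x k ^ ((1:ℝ)/2))
          = ∑ j ∈ Finset.univ.erase i,
            Real.exp (σ i ^ 2 * (t - T) / 8) * Real.exp (σ j ^ 2 * (t - T) / 8) *
              x j ^ ((1:ℝ)/2) := Finset.sum_congr rfl fun k _ => by ring
      rw [hcomm]
      ring
    have h2 : ∀ i : Fin n, iteratedDeriv 2 (fun y => V (Function.update x i y) t) (x i)
        = (2 * ∑ j ∈ Finset.univ.erase i,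
            Real.exp (σ i ^ 2 * (t - T) / 8) * Real.exp (σ j ^ 2 * (t - T) / 8) *
              x j ^ ((1:ℝ)/2)) * (-(1/4)) * x i ^ (-(3/2) : ℝ) := by
      intro i
      rw [hfi i]
      exact aux_second_deriv _ _ _ (hx i)
    -- per-index identity for the space term
    have hterm : ∀ i : Fin n, σ i ^ 2 * x i ^ 2 *
          ((2 * ∑ j ∈ Finset.univ.erase i,
            Real.exp (σ i ^ 2 * (t - T) / 8) * Real.exp (σ j ^ 2 * (t - T) / 8) *
              x j ^ ((1:ℝ)/2)) * (-(1/4)) * x i ^ (-(3/2) : ℝ))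
        = ∑ j ∈ Finset.univ.erase i, (-(σ i ^ 2 / 2)) *
            (Real.exp (σ i ^ 2 * (t - T) / 8) * Real.exp (σ j ^ 2 * (t - T) / 8) *
              (x i ^ ((1:ℝ)/2) * x j ^ ((1:ℝ)/2))) := by
      intro i
      have hxp : x i ^ 2 * x i ^ (-(3/2) : ℝ) = x i ^ ((1:ℝ)/2) := by
        rw [← Real.rpow_natCast (x i) 2, ← Real.rpow_add (hx i)]
        norm_num
      have hfac : ∑ j ∈ Finset.univ.erase i, (-(σ i ^ 2 / 2)) *
            (Real.exp (σ i ^ 2 * (t - T) / 8) * Real.exp (σ j ^ 2 * (t - T) / 8) *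
              (x i ^ ((1:ℝ)/2) * x j ^ ((1:ℝ)/2)))
          = (-(σ i ^ 2 / 2)) * ((∑ j ∈ Finset.univ.erase i,
              Real.exp (σ i ^ 2 * (t - T) / 8) * Real.exp (σ j ^ 2 * (t - T) / 8) *
                x j ^ ((1:ℝ)/2)) * x i ^ ((1:ℝ)/2)) := by
        rw [Finset.sum_mul, Finset.mul_sum]
        exact Finset.sum_congr rfl fun j _ => by ring
      rw [hfac, ← hxp]
      ring
    rw [hdt]
    rw [Finset.mul_sum]
    have hsp : ∀ i : Fin n, 1/2 * (σ i ^ 2 * x i ^ 2 *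
          iteratedDeriv 2 (fun y => V (Function.update x i y) t) (x i))
        = ∑ j ∈ Finset.univ.erase i, (-(σ i ^ 2 / 4)) *
            (Real.exp (σ i ^ 2 * (t - T) / 8) * Real.exp (σ j ^ 2 * (t - T) / 8) *
              (x i ^ ((1:ℝ)/2) * x j ^ ((1:ℝ)/2))) := by
      intro i
      rw [h2 i]
      have := hterm i
      rw [show σ i ^ 2 * x i ^ 2 *
          ((2 * ∑ j ∈ Finset.univ.erase i,
            Real.exp (σ i ^ 2 * (t - T) / 8) * Real.exp (σ j ^ 2 * (t - T) / 8) *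
              x j ^ ((1:ℝ)/2)) * (-(1/4)) * x i ^ (-(3/2) : ℝ))
        = σ i ^ 2 * x i ^ 2 *
          ((2 * ∑ j ∈ Finset.univ.erase i,
            Real.exp (σ i ^ 2 * (t - T) / 8) * Real.exp (σ j ^ 2 * (t - T) / 8) *
              x j ^ ((1:ℝ)/2)) * (-(1/4)) * x i ^ (-(3/2) : ℝ)) from rfl] at this
      calc 1/2 * (σ i ^ 2 * x i ^ 2 *
          ((2 * ∑ j ∈ Finset.univ.erase i,
            Real.exp (σ i ^ 2 * (t - T) / 8) * Real.exp (σ j ^ 2 * (t - T) / 8) *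
              x j ^ ((1:ℝ)/2)) * (-(1/4)) * x i ^ (-(3/2) : ℝ)))
          = 1/2 * ∑ j ∈ Finset.univ.erase i, (-(σ i ^ 2 / 2)) *
            (Real.exp (σ i ^ 2 * (t - T) / 8) * Real.exp (σ j ^ 2 * (t - T) / 8) *
              (x i ^ ((1:ℝ)/2) * x j ^ ((1:ℝ)/2))) := by rw [this]
        _ = ∑ j ∈ Finset.univ.erase i, (-(σ i ^ 2 / 4)) *
            (Real.exp (σ i ^ 2 * (t - T) / 8) * Real.exp (σ j ^ 2 * (t - T) / 8) *
              (x i ^ ((1:ℝ)/2) * x j ^ ((1:ℝ)/2))) := by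
            rw [Finset.mul_sum]; exact Finset.sum_congr rfl fun j _ => by ring
    rw [Finset.sum_congr rfl fun i _ => hsp i]
    rw [← Finset.sum_add_distrib]
    have hmerge : ∀ i : Fin n,
        (∑ j ∈ Finset.univ.erase i, (σ i ^ 2 / 8 + σ j ^ 2 / 8) *
          (Real.exp (σ i ^ 2 * (t - T) / 8) * Real.exp (σ j ^ 2 * (t - T) / 8) *
            (x i ^ ((1:ℝ)/2) * x j ^ ((1:ℝ)/2))))
        + (∑ j ∈ Finset.univ.erase i, (-(σ i ^ 2 / 4)) *
          (Real.exp (σ i ^ 2 * (t - T) / 8) * Real.exp (σ j ^ 2 * (t - T) / 8) *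
            (x i ^ ((1:ℝ)/2) * x j ^ ((1:ℝ)/2))))
        = ∑ j, (σ j ^ 2 / 8 - σ i ^ 2 / 8) *
          (Real.exp (σ i ^ 2 * (t - T) / 8) * Real.exp (σ j ^ 2 * (t - T) / 8) *
            (x i ^ ((1:ℝ)/2) * x j ^ ((1:ℝ)/2))) := by
      intro i
      rw [← Finset.sum_add_distrib]
      rw [← Finset.sum_erase (Finset.univ)
        (f := fun j => (σ j ^ 2 / 8 - σ i ^ 2 / 8) *
          (Real.exp (σ i ^ 2 * (t - T) / 8) * Real.exp (σ j ^ 2 * (t - T) / 8) *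
            (x i ^ ((1:ℝ)/2) * x j ^ ((1:ℝ)/2)))) (a := i) (by ring)]
      exact Finset.sum_congr rfl fun j _ => by ring
    rw [Finset.sum_congr rfl fun i _ => hmerge i]
    have hkey : (∑ i, ∑ j, (σ j ^ 2 / 8 - σ i ^ 2 / 8) *
          (Real.exp (σ i ^ 2 * (t - T) / 8) * Real.exp (σ j ^ 2 * (t - T) / 8) *
            (x i ^ ((1:ℝ)/2) * x j ^ ((1:ℝ)/2))))
        = -(∑ i, ∑ j, (σ j ^ 2 / 8 - σ i ^ 2 / 8) *
          (Real.exp (σ i ^ 2 * (t - T) / 8) * Real.exp (σ j ^ 2 * (t - T) / 8) *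
            (x i ^ ((1:ℝ)/2) * x j ^ ((1:ℝ)/2)))) := by
      conv_lhs => rw [Finset.sum_comm]
      rw [neg_eq_iff_eq_neg.symm] at *
      rw [← Finset.sum_neg_distrib]
      refine Finset.sum_congr rfl fun j _ => ?_
      rw [← Finset.sum_neg_distrib]
      refine Finset.sum_congr rfl fun i _ => ?_
      ring
    linarith [hkey]
  · -- terminal value
    rw [hV]
    simp only [sub_self, mul_zero, zero_div, Real.exp_zero, one_mul]
    rw [sq, Finset.sum_mul_sum]
    have hdiag : ∀ i : Fin n, ∑ j, x i ^ ((1:ℝ)/2) * x j ^ ((1:ℝ)/2)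
        = x i + ∑ j ∈ Finset.univ.erase i, x i ^ ((1:ℝ)/2) * x j ^ ((1:ℝ)/2) := by
      intro i
      rw [← Finset.add_sum_erase _ _ (Finset.mem_univ i)]
      congr 1
      rw [← Real.rpow_add (hx i)]
      norm_num
    rw [Finset.sum_congr rfl fun i _ => hdiag i, Finset.sum_add_distrib]
end

section
/- Let σ > 0, K > 0, T > 0, and define V(x,t) = N(z₀)x + (1 − N(z₁))K for (x,t) ∈ ℝ₊ × [0,T), where z₀ = (log(x/K) + σ²(T−t)/2)/(σ√(T−t)), z₁ = z₀ − σ√(T−t), and N is the standard normal CDF. Then V satisfies the PDE ∂V/∂t + (1/2)σ²x² ∂²V/∂x² = 0 on ℝ₊ × [0,T), and its spatial derivative is ∂V/∂x = N(z₀). -/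
noncomputable def gphi (z : ℝ) : ℝ := (Real.sqrt (2 * Real.pi))⁻¹ * Real.exp (-z ^ 2 / 2)

lemma gauss_integrable : MeasureTheory.Integrable (fun u : ℝ => Real.exp (-u ^ 2 / 2)) := by
  have h := integrable_exp_neg_mul_sq (by norm_num : (0:ℝ) < 1/2)
  convert h using 2 with u
  ring_nf

lemma hasDerivAt_N (N : ℝ → ℝ)
    (hN : ∀ z : ℝ, N z =
      (Real.sqrt (2 * Real.pi))⁻¹ * ∫ u in Set.Iic z, Real.exp (-u ^ 2 / 2)) (z : ℝ) :
    HasDerivAt N (gphi z) z := by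
  have hint := gauss_integrable
  have key : ∀ w : ℝ, (∫ u in Set.Iic w, Real.exp (-u ^ 2 / 2)) =
      (∫ u in Set.Iic (0:ℝ), Real.exp (-u ^ 2 / 2)) +
        ∫ u in (0:ℝ)..w, Real.exp (-u ^ 2 / 2) := by
    intro w
    have := intervalIntegral.integral_Iic_sub_Iic (hint.integrableOn) (hint.integrableOn)
      (a := 0) (b := w)
    linarith
  have hcont : Continuous (fun u : ℝ => Real.exp (-u ^ 2 / 2)) := by fun_prop
  have h1 : HasDerivAt (fun w => ∫ u in (0:ℝ)..w, Real.exp (-u ^ 2 / 2))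
      (Real.exp (-z ^ 2 / 2)) z :=
    intervalIntegral.integral_hasDerivAt_right hint.intervalIntegrable
      (hcont.stronglyMeasurableAtFilter _ _) hcont.continuousAt
  have h2 := ((h1.const_add (∫ u in Set.Iic (0:ℝ), Real.exp (-u ^ 2 / 2))).const_mul
      ((Real.sqrt (2 * Real.pi))⁻¹))
  have hfun : N = fun w => (Real.sqrt (2 * Real.pi))⁻¹ *
      ((∫ u in Set.Iic (0:ℝ), Real.exp (-u ^ 2 / 2)) + ∫ u in (0:ℝ)..w, Real.exp (-u ^ 2 / 2)) :=
    funext fun w => by rw [hN w, key w]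
  rw [hfun]
  exact h2

/-- The zero-interest-rate Black–Scholes function
`V(x,t) = N(z₀)x + (1 − N(z₁))K` satisfies `∂V/∂t + (1/2)σ²x²∂²V/∂x² = 0`
on `ℝ₊ × [0,T)` and `∂V/∂x = N(z₀)`. -/
theorem black_scholes_zero_rate (σ K T : ℝ) (hσ : 0 < σ) (hK : 0 < K) (hT : 0 < T)
    (N : ℝ → ℝ)
    (hN : ∀ z : ℝ, N z =
      (Real.sqrt (2 * Real.pi))⁻¹ * ∫ u in Set.Iic z, Real.exp (-u ^ 2 / 2))
    (V : ℝ → ℝ → ℝ)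
    (hV : ∀ x t : ℝ, V x t =
      N ((Real.log (x / K) + σ ^ 2 * (T - t) / 2) / (σ * Real.sqrt (T - t))) * x
        + (1 - N ((Real.log (x / K) + σ ^ 2 * (T - t) / 2) / (σ * Real.sqrt (T - t))
            - σ * Real.sqrt (T - t))) * K) :
    ∀ x : ℝ, 0 < x → ∀ t ∈ Set.Ico (0:ℝ) T,
      (deriv (fun s => V x s) t
        + (1/2) * σ ^ 2 * x ^ 2 * iteratedDeriv 2 (fun y => V y t) x = 0) ∧
      deriv (fun y => V y t) x =
        N ((Real.log (x / K) + σ ^ 2 * (T - t) / 2) / (σ * Real.sqrt (T - t))) := by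
  intro x hx t ht
  obtain ⟨ht0, htT⟩ := ht
  have hτ : 0 < T - t := by linarith
  set r : ℝ := Real.sqrt (T - t) with hrdef
  have hr : 0 < r := Real.sqrt_pos.mpr hτ
  have hr2 : r * r = T - t := Real.mul_self_sqrt hτ.le
  set z0 : ℝ → ℝ := fun y => (Real.log (y / K) + σ ^ 2 * (T - t) / 2) / (σ * r) with hz0def
  -- the key exp identity
  have hid : ∀ y : ℝ, 0 < y → K * gphi (z0 y - σ * r) = y * gphi (z0 y) := by
    intro y hy
    have hzs : z0 y * (σ * r) = Real.log (y / K) + σ ^ 2 * (T - t) / 2 := by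
      rw [hz0def]
      field_simp
    have hexp : Real.exp (-(z0 y - σ * r) ^ 2 / 2) =
        Real.exp (-(z0 y) ^ 2 / 2) * (y / K) := by
      rw [← Real.exp_log (div_pos hy hK), ← Real.exp_add]
      congr 1
      nlinarith [hzs, hr2]
    simp only [gphi]
    rw [hexp]
    field_simp
  -- derivative of z0 in y
  have hz0der : ∀ y : ℝ, 0 < y → HasDerivAt z0 (1 / (y * (σ * r))) y := by
    intro y hy
    have h1 : HasDerivAt (fun y' : ℝ => y' / K) (1 / K) y := by
      simpa using (hasDerivAt_id y).div_const K
    have hlog : HasDerivAt (fun y' : ℝ => Real.log (y' / K)) (1 / y) y := by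
      have h2 := (Real.hasDerivAt_log (div_ne_zero hy.ne' hK.ne')).comp y h1
      refine h2.congr_deriv ?_
      field_simp
    have := (hlog.add_const (σ ^ 2 * (T - t) / 2)).div_const (σ * r)
    refine this.congr_deriv ?_
    field_simp
  -- spatial derivative of V at any y > 0
  have hspace : ∀ y : ℝ, 0 < y → HasDerivAt (fun y' => V y' t) (N (z0 y)) y := by
    intro y hy
    have hfun : (fun y' => V y' t) =
        fun y' => N (z0 y') * y' + (1 - N (z0 y' - σ * r)) * K :=
      funext fun y' => by rw [hV y' t]
    rw [hfun]
    have hN0 : HasDerivAt (fun y' => N (z0 y')) (gphi (z0 y) * (1 / (y * (σ * r)))) y :=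
      (hasDerivAt_N N hN (z0 y)).comp y (hz0der y hy)
    have hN1 : HasDerivAt (fun y' => N (z0 y' - σ * r))
        (gphi (z0 y - σ * r) * (1 / (y * (σ * r)))) y :=
      (hasDerivAt_N N hN (z0 y - σ * r)).comp y ((hz0der y hy).sub_const (σ * r))
    have hD := (hN0.mul (hasDerivAt_id y)).add
      (((hasDerivAt_const y (1:ℝ)).sub hN1).mul_const K)
    refine hD.congr_deriv ?_
    have hkey := hid y hy
    have hy' : y ≠ 0 := hy.ne'
    have hsr : σ * r ≠ 0 := by positivity
    field_simp
    simp only [id]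
    nlinarith [hkey]
  constructor
  · -- PDE part
    set A := Real.log (x / K) with hAdef
    have hTt : HasDerivAt (fun s : ℝ => T - s) (-1) t := by
      exact (hasDerivAt_id' t).const_sub T
    have hR : HasDerivAt (fun s : ℝ => Real.sqrt (T - s)) (-(1 / (2 * r))) t := by
      have h := (Real.hasDerivAt_sqrt hτ.ne').comp t hTt
      refine h.congr_deriv ?_
      rw [hrdef]; ring
    have hsr : σ * r ≠ 0 := by positivity
    have hinv : HasDerivAt (fun s : ℝ => (σ * Real.sqrt (T - s))⁻¹)
        (-(σ * -(1 / (2 * r))) / (σ * r) ^ 2) t := by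
      have h1 : HasDerivAt (fun s : ℝ => σ * Real.sqrt (T - s)) (σ * -(1 / (2 * r))) t :=
        hR.const_mul σ
      exact h1.inv (by positivity)
    set D0 : ℝ := A * (-(σ * -(1 / (2 * r))) / (σ * r) ^ 2) + σ * -(1 / (2 * r)) / 2 with hD0def
    have hG : HasDerivAt
        (fun s : ℝ => A * (σ * Real.sqrt (T - s))⁻¹ + σ * Real.sqrt (T - s) / 2) D0 t :=
      (hinv.const_mul A).add ((hR.const_mul σ).div_const 2)
    set Z0 : ℝ → ℝ := fun s => (A + σ ^ 2 * (T - s) / 2) / (σ * Real.sqrt (T - s)) with hZ0def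
    have hZ0 : HasDerivAt Z0 D0 t := by
      apply hG.congr_of_eventuallyEq
      filter_upwards [isOpen_Iio.mem_nhds htT] with s hs
      have hws : 0 < Real.sqrt (T - s) := Real.sqrt_pos.mpr (by simpa using hs)
      have hw2 : Real.sqrt (T - s) * Real.sqrt (T - s) = T - s :=
        Real.mul_self_sqrt (by simp at hs; linarith)
      rw [hZ0def]
      field_simp
      linear_combination (-σ^2) * hw2
    have hZ1 : HasDerivAt (fun s => Z0 s - σ * Real.sqrt (T - s))
        (D0 - σ * -(1 / (2 * r))) t := hZ0.sub (hR.const_mul σ)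
    have hZ0t : Z0 t = z0 x := by rw [hZ0def, hz0def, hAdef]
    have hNT0 : HasDerivAt (fun s => N (Z0 s)) (gphi (z0 x) * D0) t := by
      have := (hasDerivAt_N N hN (Z0 t)).comp t hZ0
      rwa [hZ0t] at this
    have hNT1 : HasDerivAt (fun s => N (Z0 s - σ * Real.sqrt (T - s)))
        (gphi (z0 x - σ * r) * (D0 - σ * -(1 / (2 * r)))) t := by
      have := (hasDerivAt_N N hN (Z0 t - σ * Real.sqrt (T - t))).comp t hZ1
      rwa [hZ0t, ← hrdef] at this
    have hF : HasDerivAt (fun s => V x s)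
        (gphi (z0 x) * D0 * x +
          (0 - gphi (z0 x - σ * r) * (D0 - σ * -(1 / (2 * r)))) * K) t := by
      have hfun : (fun s => V x s) =
          fun s => N (Z0 s) * x + (1 - N (Z0 s - σ * Real.sqrt (T - s))) * K :=
        funext fun s => by rw [hV x s, hZ0def, hAdef]
      rw [hfun]
      exact (hNT0.mul_const x).add (((hasDerivAt_const t (1:ℝ)).sub hNT1).mul_const K)
    have hN0x : HasDerivAt (fun y' => N (z0 y')) (gphi (z0 x) * (1 / (x * (σ * r)))) x :=
      (hasDerivAt_N N hN (z0 x)).comp x (hz0der x hx)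
    have hiter : iteratedDeriv 2 (fun y => V y t) x = gphi (z0 x) * (1 / (x * (σ * r))) := by
      rw [iteratedDeriv_succ, iteratedDeriv_one]
      have hev : deriv (fun y => V y t) =ᶠ[nhds x] fun y => N (z0 y) := by
        filter_upwards [isOpen_Ioi.mem_nhds hx] with y hy
        exact (hspace y hy).deriv
      rw [hev.deriv_eq]
      exact hN0x.deriv
    rw [hiter, hF.deriv]
    have hkey := hid x hx
    have hx' : x ≠ 0 := hx.ne'
    have hQ : gphi (z0 x - σ * r) = x * gphi (z0 x) / K := by
      field_simp
      linarith [hkey]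
    rw [hQ, hD0def]
    field_simp
    ring
  · exact (hspace x hx).deriv
end
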